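/- Let k be a positive even integer and q a positive integer with k·q/2 ≤ n. Define A_{n,k} = {(R_1, …, R_k) ∈ P_2(I_{n,q}^k) : R_i ∩ R_j = ∅ whenever R_i ≠ R_j} and B_{n,k} = P_2(I_{n,q}^k) ∖ A_{n,k}. Then (k−1)!! · (1 − k²q²/(4n)) · C(n,q)^{k/2} ≤ |A_{n,k}| ≤ (k−1)!! · C(n,q)^{k/2}, and |B_{n,k}| ≤ (k²q²/(4n)) · (k−1)!! · C(n,q)^{k/2}. -/

import Mathlib

open BigOperators
open scoped Classical
open Finset

/-- Tuples in which every entry appears exactly twice. -/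
def PairTuple {X : Type*} {k : ℕ} (R : Fin k → X) : Prop :=
  ∀ i, (Finset.univ.filter fun j => R j = R i).card = 2


section
variable {α : Type} [Fintype α] [DecidableEq α]

def Compl2 (x₀ y : α) : Finset α := ({x₀, y} : Finset α)ᶜ

lemma mem_compl2 {x₀ y x : α} : x ∈ Compl2 x₀ y ↔ x ≠ x₀ ∧ x ≠ y := by
  simp [Compl2, not_or]

def bwd (x₀ y : α) (τ : (Compl2 x₀ y) → (Compl2 x₀ y)) : α → α :=
  fun x => if hx : x ∈ Compl2 x₀ y then ↑(τ ⟨x, hx⟩) else if x = x₀ then y else x₀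

lemma bwd_mem (x₀ y : α) (τ) {x : α} (hx : x ∈ Compl2 x₀ y) :
    bwd x₀ y τ x = ↑(τ ⟨x, hx⟩) := by simp [bwd, hx]

lemma bwd_x₀ (x₀ y : α) (hy : y ≠ x₀) (τ) : bwd x₀ y τ x₀ = y := by
  have : x₀ ∉ Compl2 x₀ y := by simp [mem_compl2]
  simp [bwd, this]

lemma bwd_y (x₀ y : α) (hy : y ≠ x₀) (τ) : bwd x₀ y τ y = x₀ := by
  have : y ∉ Compl2 x₀ y := by simp [mem_compl2]
  simp [bwd, this, hy]

lemma bwd_inv (x₀ y : α) (hy : y ≠ x₀) (τ : (Compl2 x₀ y) → (Compl2 x₀ y))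
    (hτ : Function.Involutive τ) : Function.Involutive (bwd x₀ y τ) := by
  intro x
  by_cases hx : x ∈ Compl2 x₀ y
  · rw [bwd_mem x₀ y τ hx]
    have h2 : (↑(τ ⟨x, hx⟩) : α) ∈ Compl2 x₀ y := (τ ⟨x, hx⟩).2
    rw [bwd_mem x₀ y τ h2]
    have := hτ ⟨x, hx⟩
    rw [show (⟨↑(τ ⟨x, hx⟩), h2⟩ : Compl2 x₀ y) = τ ⟨x, hx⟩ from Subtype.ext rfl, this]
  · rw [mem_compl2, not_and_or, not_ne_iff, not_ne_iff] at hx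
    rcases hx with h | h
    · rw [h, bwd_x₀ x₀ y hy, bwd_y x₀ y hy]
    · rw [h, bwd_y x₀ y hy, bwd_x₀ x₀ y hy]

lemma bwd_fpf (x₀ y : α) (hy : y ≠ x₀) (τ : (Compl2 x₀ y) → (Compl2 x₀ y))
    (hτ : ∀ z, τ z ≠ z) : ∀ x, bwd x₀ y τ x ≠ x := by
  intro x
  by_cases hx : x ∈ Compl2 x₀ y
  · rw [bwd_mem x₀ y τ hx]
    intro h
    exact hτ ⟨x, hx⟩ (Subtype.ext h)
  · rw [mem_compl2, not_and_or, not_ne_iff, not_ne_iff] at hx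
    rcases hx with h | h
    · rw [h, bwd_x₀ x₀ y hy]; exact hy
    · rw [h, bwd_y x₀ y hy]; exact fun hc => hy hc.symm


lemma card_fpf_step {α : Type} [Fintype α] [DecidableEq α] (x₀ : α) :
    Fintype.card {σ : α → α // Function.Involutive σ ∧ ∀ x, σ x ≠ x}
      = ∑ y : {y : α // y ≠ x₀}, Fintype.card
          {τ : (Compl2 x₀ (y:α)) → (Compl2 x₀ (y:α)) // Function.Involutive τ ∧ ∀ x, τ x ≠ x} := by
  rw [← Fintype.card_sigma]
  refine (Fintype.card_of_bijective (f := fun p : (Σ y : {y : α // y ≠ x₀},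
      {τ : (Compl2 x₀ (y:α)) → (Compl2 x₀ (y:α)) // Function.Involutive τ ∧ ∀ x, τ x ≠ x}) =>
      (⟨bwd x₀ (p.1 : α) p.2.1, bwd_inv _ _ p.1.2 _ p.2.2.1, bwd_fpf _ _ p.1.2 _ p.2.2.2⟩ :
        {σ : α → α // Function.Involutive σ ∧ ∀ x, σ x ≠ x})) ?_).symm
  constructor
  · rintro ⟨⟨y, hy⟩, τ, hτ1, hτ2⟩ ⟨⟨y', hy'⟩, τ', hτ1', hτ2'⟩ hB
    have hB' : bwd x₀ y τ = bwd x₀ y' τ' := congrArg Subtype.val hB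
    have hyy : y = y' := by
      have := congrFun hB' x₀
      rwa [bwd_x₀ x₀ y hy, bwd_x₀ x₀ y' hy'] at this
    subst hyy
    have hττ : τ = τ' := by
      funext z
      have hz := congrFun hB' (z : α)
      rw [bwd_mem x₀ y τ z.2, bwd_mem x₀ y τ' z.2] at hz
      apply Subtype.ext
      simpa using hz
    subst hττ
    rfl
  · rintro ⟨σ, hσ1, hσ2⟩
    have hmem : ∀ x : (Compl2 x₀ (σ x₀)), (σ (x:α)) ∈ Compl2 x₀ (σ x₀) := by
      rintro ⟨x, hx⟩
      rw [mem_compl2] at hx ⊢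
      constructor
      · intro hc
        exact hx.2 (by rw [← hc, hσ1])
      · intro hc
        exact hx.1 (by have := congrArg σ hc; rwa [hσ1, hσ1] at this)
    refine ⟨⟨⟨σ x₀, hσ2 x₀⟩, ⟨fun x => ⟨σ x, hmem x⟩, ?_, ?_⟩⟩, ?_⟩
    · intro x; apply Subtype.ext; simpa using hσ1 (x:α)
    · intro x; intro hc
      exact hσ2 (x:α) (congrArg Subtype.val hc)
    · apply Subtype.ext
      funext x
      show bwd x₀ (σ x₀) _ x = σ x
      by_cases hx : x ∈ Compl2 x₀ (σ x₀)
      · rw [bwd_mem x₀ (σ x₀) _ hx]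
      · rw [mem_compl2, not_and_or, not_ne_iff, not_ne_iff] at hx
        rcases hx with hh | hh
        · rw [hh, bwd_x₀ _ _ (hσ2 x₀)]
        · rw [hh, bwd_y _ _ (hσ2 x₀), hσ1]

lemma card_fpf : ∀ (m : ℕ) (α : Type) [Fintype α] [DecidableEq α],
    Fintype.card α = 2*m →
    Fintype.card {σ : α → α // Function.Involutive σ ∧ ∀ x, σ x ≠ x}
      = Nat.doubleFactorial (2*m-1) := by
  intro m
  induction m with
  | zero =>
    intro α _ _ h
    simp only [Nat.mul_zero] at h
    have he : IsEmpty α := Fintype.card_eq_zero_iff.mp h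
    have : Fintype.card {σ : α → α // Function.Involutive σ ∧ ∀ x, σ x ≠ x} = 1 := by
      refine Fintype.card_eq_one_iff.mpr ?_
      refine ⟨⟨id, fun x => he.elim x, fun x => he.elim x⟩, ?_⟩
      rintro ⟨σ, hσ⟩
      refine Subtype.ext (funext fun x => he.elim x)
    simpa using this
  | succ m ih =>
    intro α _ _ h
    have hpos : 0 < Fintype.card α := by omega
    obtain ⟨x₀⟩ := Fintype.card_pos_iff.mp hpos
    rw [card_fpf_step x₀]
    have hcardT : ∀ y : {y : α // y ≠ x₀}, Fintype.card
        {τ : (Compl2 x₀ (y:α)) → (Compl2 x₀ (y:α)) // Function.Involutive τ ∧ ∀ x, τ x ≠ x}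
        = Nat.doubleFactorial (2*m-1) := by
      intro y
      have hc : Fintype.card (Compl2 x₀ (y:α)) = 2*m := by
        have h2 : ({x₀, (y:α)} : Finset α).card = 2 := by
          rw [card_insert_of_notMem (by simp [y.2.symm] : x₀ ∉ ({(y:α)} : Finset α)),
            card_singleton]
        rw [Fintype.card_coe]
        unfold Compl2
        rw [card_compl, h2, h]
        omega
      exact ih _ hc
    have hne : Fintype.card {y : α // y ≠ x₀} = 2*m+1 := by
      simp only [ne_eq, Fintype.card_subtype_compl, Fintype.card_subtype_eq, h]
      omega
    refine (Finset.sum_congr rfl fun y _ => hcardT y).trans ?_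
    rw [Finset.sum_const, Finset.card_univ, hne, smul_eq_mul]
    have h1 : 2 * (m+1) - 1 = 2*m+1 := by omega
    rw [h1]
    cases m with
    | zero => simp
    | succ m =>
      have h2 : 2*(m+1)+1 = (2*m+1)+2 := by omega
      have h3 : 2*(m+1)-1 = 2*m+1 := by omega
      rw [h2, Nat.doubleFactorial_add_two, h3]


end

section
variable (n q : ℕ)

def Qset : Finset (Finset (Fin n)) := Finset.powersetCard q Finset.univ

lemma mem_Qset {S : Finset (Fin n)} : S ∈ Qset n q ↔ S.card = q :=
  Finset.mem_powersetCard_univ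

lemma card_Qset : (Qset n q).card = n.choose q := by
  rw [Qset, Finset.card_powersetCard, Finset.card_univ, Fintype.card_fin]

lemma card_Qtuple (m : ℕ) :
    ((Finset.univ : Finset (Fin m → Finset (Fin n))).filter fun v => ∀ a, (v a).card = q).card
      = (n.choose q) ^ m := by
  have : ((Finset.univ : Finset (Fin m → Finset (Fin n))).filter fun v => ∀ a, (v a).card = q)
      = Fintype.piFinset (fun _ : Fin m => Qset n q) := by
    ext v
    simp [Fintype.mem_piFinset, mem_Qset]
  rw [this, Fintype.card_piFinset]
  simp [card_Qset]

lemma card_mem_le (x : Fin n) :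
    ((Qset n q).filter fun S => x ∈ S).card ≤ (n-1).choose (q-1) := by
  have := Finset.card_le_card_of_injOn (f := fun S => S.erase x)
    (s := (Qset n q).filter fun S => x ∈ S)
    (t := Finset.powersetCard (q-1) (Finset.univ.erase x)) ?_ ?_
  · calc ((Qset n q).filter fun S => x ∈ S).card
        ≤ (Finset.powersetCard (q-1) (Finset.univ.erase x)).card := this
      _ = (n-1).choose (q-1) := by
          rw [Finset.card_powersetCard, Finset.card_erase_of_mem (Finset.mem_univ x),
            Finset.card_univ, Fintype.card_fin]
  · intro S hS
    rw [Finset.mem_coe, Finset.mem_filter, mem_Qset] at hS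
    rw [Finset.mem_coe, Finset.mem_powersetCard]
    exact ⟨fun y hy => Finset.mem_erase.mpr ⟨(Finset.mem_erase.mp hy).1, Finset.mem_univ y⟩,
      by rw [Finset.card_erase_of_mem hS.2, hS.1]⟩
  · intro S hS S' hS' hE
    rw [Finset.coe_filter, Set.mem_setOf_eq] at hS hS'
    simp only at hE
    rw [← Finset.insert_erase hS.2, hE, Finset.insert_erase hS'.2]

lemma card_notdisj_le (T : Finset (Fin n)) (hT : T.card = q) :
    ((Qset n q).filter fun S => ¬ Disjoint T S).card ≤ q * ((n-1).choose (q-1)) := by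
  have hsub : ((Qset n q).filter fun S => ¬ Disjoint T S)
      ⊆ T.biUnion (fun x => (Qset n q).filter fun S => x ∈ S) := by
    intro S hS
    rw [Finset.mem_filter] at hS
    obtain ⟨x, hx1, hx2⟩ := Finset.not_disjoint_iff.mp hS.2
    exact Finset.mem_biUnion.mpr ⟨x, hx1, Finset.mem_filter.mpr ⟨hS.1, hx2⟩⟩
  calc ((Qset n q).filter fun S => ¬ Disjoint T S).card
      ≤ ∑ x ∈ T, ((Qset n q).filter fun S => x ∈ S).card :=
        le_trans (Finset.card_le_card hsub) (Finset.card_biUnion_le)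
    _ ≤ ∑ _x ∈ T, (n-1).choose (q-1) := Finset.sum_le_sum fun x _ => card_mem_le n q x
    _ = q * ((n-1).choose (q-1)) := by rw [Finset.sum_const, hT, smul_eq_mul]

def DT (m : ℕ) : Finset (Fin m → Finset (Fin n)) :=
  Finset.univ.filter fun v => (∀ a, (v a).card = q) ∧ ∀ a b, a ≠ b → Disjoint (v a) (v b)

lemma card_DT_le (m : ℕ) : (DT n q m).card ≤ (n.choose q) ^ m := by
  rw [← card_Qtuple n q m]
  exact Finset.card_le_card (fun v hv => by
    rw [DT, Finset.mem_filter] at hv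
    exact Finset.mem_filter.mpr ⟨hv.1, hv.2.1⟩)

lemma card_DT_one : (DT n q 1).card = n.choose q := by
  have h := card_Qtuple n q 1
  rw [pow_one] at h
  rw [← h]
  congr 1
  ext v
  simp only [DT, Finset.mem_filter, and_congr_right_iff, and_iff_left_iff_imp]
  intro _ _ a b hab
  exact absurd (Subsingleton.elim a b) hab

end
section
variable (n q : ℕ)
lemma DT_rec (m : ℕ) :
    (n.choose q) * (DT n q m).card
      ≤ (DT n q (m+1)).card + (DT n q m).card * (m * (q * ((n-1).choose (q-1)))) := by
  classical
  set P : Finset ((Fin m → Finset (Fin n)) × Finset (Fin n)) := (DT n q m) ×ˢ (Qset n q) with hP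
  have hcardP : P.card = (DT n q m).card * (n.choose q) := by
    rw [hP, Finset.card_product, card_Qset]
  have hsplit := Finset.card_filter_add_card_filter_not
    (s := P) (p := fun p => ∀ a, Disjoint (p.1 a) p.2)
  -- good part injects into DT (m+1)
  have hE : (P.filter fun p => ∀ a, Disjoint (p.1 a) p.2).card ≤ (DT n q (m+1)).card := by
    apply Finset.card_le_card_of_injOn (f := fun p => Fin.snoc p.1 p.2)
    · rintro ⟨w, S⟩ hp
      rw [Finset.mem_coe, Finset.mem_filter, hP, Finset.mem_product] at hp
      obtain ⟨⟨hw, hS⟩, hd⟩ := hp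
      rw [Finset.mem_coe]
      dsimp only
      rw [DT, Finset.mem_filter] at hw ⊢
      refine ⟨Finset.mem_univ _, ?_, ?_⟩
      · intro a
        induction a using Fin.lastCases with
        | last => rw [Fin.snoc_last]; exact (mem_Qset n q).mp hS
        | cast b => rw [Fin.snoc_castSucc]; exact hw.2.1 b
      · intro a b hab
        induction a using Fin.lastCases with
        | last =>
          induction b using Fin.lastCases with
          | last => exact absurd rfl hab
          | cast b' =>
            rw [Fin.snoc_last, Fin.snoc_castSucc]
            exact (hd b').symm
        | cast a' =>
          induction b using Fin.lastCases with
          | last =>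
            rw [Fin.snoc_last, Fin.snoc_castSucc]
            exact hd a'
          | cast b' =>
            rw [Fin.snoc_castSucc, Fin.snoc_castSucc]
            exact hw.2.2 a' b' (by simpa using hab)
    · rintro ⟨w, S⟩ _ ⟨w', S'⟩ _ hE
      simp only at hE
      have h1 : w = w' := by
        funext a
        have := congrFun hE a.castSucc
        rwa [Fin.snoc_castSucc, Fin.snoc_castSucc] at this
      have h2 : S = S' := by
        have := congrFun hE (Fin.last m)
        rwa [Fin.snoc_last, Fin.snoc_last] at this
      rw [h1, h2]
  -- bad part
  have hF : (P.filter fun p => ¬ ∀ a, Disjoint (p.1 a) p.2).card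
      ≤ (DT n q m).card * (m * (q * ((n-1).choose (q-1)))) := by
    rw [Finset.card_eq_sum_card_fiberwise
      (f := Prod.fst) (t := DT n q m) (fun p hp => by
        rw [Finset.mem_coe, Finset.mem_filter, hP, Finset.mem_product] at hp
        exact hp.1.1)]
    refine le_trans (Finset.sum_le_card_nsmul _ _ (m * (q * ((n-1).choose (q-1)))) ?_)
      (by rw [smul_eq_mul])
    intro w hw
    -- fiber over w injects into bad S's
    have hfib : ((P.filter fun p => ¬ ∀ a, Disjoint (p.1 a) p.2).filter
        fun p => p.1 = w).card
        ≤ ((Qset n q).filter fun S => ¬ ∀ a, Disjoint (w a) S).card := by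
      apply Finset.card_le_card_of_injOn (f := Prod.snd)
      · rintro ⟨w', S⟩ hp
        simp only [Finset.mem_coe, Finset.mem_filter, hP, Finset.mem_product] at hp
        obtain ⟨⟨⟨_, hS⟩, hnd⟩, hww⟩ := hp
        subst hww
        exact Finset.mem_filter.mpr ⟨hS, hnd⟩
      · rintro ⟨w1, S1⟩ h1 ⟨w2, S2⟩ h2 hE
        simp only [Finset.coe_filter, Set.mem_setOf_eq] at h1 h2
        simp only at hE
        rw [Prod.mk.injEq]
        exact ⟨h1.2.trans h2.2.symm, hE⟩
    refine le_trans hfib ?_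
    -- union bound over a
    have hsub : ((Qset n q).filter fun S => ¬ ∀ a, Disjoint (w a) S)
        ⊆ Finset.univ.biUnion fun a : Fin m => (Qset n q).filter fun S => ¬ Disjoint (w a) S := by
      intro S hS
      rw [Finset.mem_filter, not_forall] at hS
      obtain ⟨a, ha⟩ := hS.2
      exact Finset.mem_biUnion.mpr ⟨a, Finset.mem_univ a, Finset.mem_filter.mpr ⟨hS.1, ha⟩⟩
    have hwcard : ∀ a, (w a).card = q := by
      rw [DT, Finset.mem_filter] at hw
      exact hw.2.1
    calc ((Qset n q).filter fun S => ¬ ∀ a, Disjoint (w a) S).card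
        ≤ ∑ a : Fin m, ((Qset n q).filter fun S => ¬ Disjoint (w a) S).card :=
          le_trans (Finset.card_le_card hsub) Finset.card_biUnion_le
      _ ≤ ∑ _a : Fin m, q * ((n-1).choose (q-1)) :=
          Finset.sum_le_sum fun a _ => card_notdisj_le n q (w a) (hwcard a)
      _ = m * (q * ((n-1).choose (q-1))) := by
          rw [Finset.sum_const, Finset.card_univ, Fintype.card_fin, smul_eq_mul]
  calc (n.choose q) * (DT n q m).card = P.card := by rw [hcardP, mul_comm]
    _ = _ + _ := hsplit.symm
    _ ≤ (DT n q (m+1)).card + (DT n q m).card * (m * (q * ((n-1).choose (q-1)))) :=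
        Nat.add_le_add hE hF
end
section
variable (n q : ℕ)
lemma DT_claim (m : ℕ) :
    (n.choose q : ℝ)^(m+1) - ((m:ℝ)*(m+1)/2) * ((q:ℝ) * ((n-1).choose (q-1) : ℝ))
        * (n.choose q : ℝ)^m ≤ ((DT n q (m+1)).card : ℝ) := by
  set N : ℝ := (n.choose q : ℝ) with hN
  set c : ℝ := (q:ℝ) * ((n-1).choose (q-1) : ℝ) with hc
  have hN0 : 0 ≤ N := by positivity
  have hc0 : 0 ≤ c := by positivity
  induction m with
  | zero =>
    simp only [Nat.cast_zero, pow_one, pow_zero]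
    rw [card_DT_one]
    simp [hN]
  | succ m ih =>
    set D : ℝ := ((DT n q (m+1)).card : ℝ) with hD
    have hD0 : 0 ≤ D := by positivity
    have h1 : N * D ≤ ((DT n q (m+2)).card : ℝ) + D * (((m:ℝ)+1) * c) := by
      have := DT_rec n q (m+1)
      have hcast := (Nat.cast_le (α := ℝ)).mpr this
      push_cast at hcast
      convert hcast using 2 <;> push_cast <;> ring
    have hub : D ≤ N^(m+1) := by
      have := card_DT_le n q (m+1)
      have := (Nat.cast_le (α := ℝ)).mpr this
      push_cast at this
      convert this using 1
    have e1 : N^(m+2) - ((m:ℝ)*(m+1)/2)*c*N^(m+1) ≤ N * D := by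
      have key : N^(m+2) - ((m:ℝ)*(m+1)/2)*c*N^(m+1)
          = N * (N^(m+1) - ((m:ℝ)*(m+1)/2)*c*N^m) := by ring
      rw [key]
      exact mul_le_mul_of_nonneg_left ih hN0
    have e2 : (((m:ℝ)+1)*c)*D ≤ (((m:ℝ)+1)*c)*N^(m+1) :=
      mul_le_mul_of_nonneg_left hub (by positivity)
    have hBE : ((((m:ℝ)+1))*((m:ℝ)+2)/2)*c*N^(m+1)
        = ((m:ℝ)*(m+1)/2)*c*N^(m+1) + (((m:ℝ)+1)*c)*N^(m+1) := by ring
    have goal' : N^(m+2) - (((m:ℝ)+1)*((m:ℝ)+2)/2)*c*N^(m+1)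
        ≤ ((DT n q (m+2)).card : ℝ) := by linarith
    convert goal' using 2 <;> push_cast <;> ring

lemma choose_identity (hn : 0 < n) (hq : 1 ≤ q) :
    (n : ℝ) * ((n-1).choose (q-1) : ℝ) = (q : ℝ) * (n.choose q : ℝ) := by
  have h := Nat.add_one_mul_choose_eq (n-1) (q-1)
  have h1 : n - 1 + 1 = n := by omega
  have h2 : q - 1 + 1 = q := by omega
  rw [h1, h2] at h
  exact_mod_cast congrArg (Nat.cast (R := ℝ)) (h.trans (mul_comm _ _))

lemma DT_ge (hn : 0 < n) (hq : 1 ≤ q) (hqn : q ≤ n) (m : ℕ) (hm : 1 ≤ m) :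
    (n.choose q : ℝ)^m - (m:ℝ)^2 * (q:ℝ)^2 / (n:ℝ) * (n.choose q : ℝ)^m
      ≤ ((DT n q m).card : ℝ) := by
  obtain ⟨m', rfl⟩ : ∃ m', m = m' + 1 := ⟨m - 1, by omega⟩
  have hclaim := DT_claim n q m'
  set N : ℝ := (n.choose q : ℝ) with hN
  have hN0 : 0 ≤ N := by positivity
  have hn0 : (0:ℝ) < n := by exact_mod_cast hn
  have hid := choose_identity n q hn hq
  have hC : ((n-1).choose (q-1) : ℝ) = (q:ℝ) * N / n := by
    field_simp
    linarith [hid]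
  rw [hC] at hclaim
  have hm0 : (0:ℝ) ≤ (m':ℝ) := Nat.cast_nonneg m'
  have hmono : (m':ℝ)*((m':ℝ)+1)/2 ≤ ((m':ℝ)+1)^2 := by nlinarith [hm0]
  have hfac : (0:ℝ) ≤ (q:ℝ)^2 * N^(m'+1) / n := by positivity
  have hcoef : ((m':ℝ)*((m':ℝ)+1)/2) * ((q:ℝ) * ((q:ℝ) * N / n)) * N^m'
      ≤ ((m':ℝ)+1)^2 * (q:ℝ)^2 / n * N^(m'+1) := by
    calc ((m':ℝ)*((m':ℝ)+1)/2) * ((q:ℝ) * ((q:ℝ) * N / n)) * N^m'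
        = ((m':ℝ)*((m':ℝ)+1)/2) * ((q:ℝ)^2 * N^(m'+1) / n) := by ring
      _ ≤ ((m':ℝ)+1)^2 * ((q:ℝ)^2 * N^(m'+1) / n) := mul_le_mul_of_nonneg_right hmono hfac
      _ = ((m':ℝ)+1)^2 * (q:ℝ)^2 / n * N^(m'+1) := by ring
  have hgoal : N^(m'+1) - ((m':ℝ)+1)^2 * (q:ℝ)^2 / n * N^(m'+1)
      ≤ ((DT n q (m'+1)).card : ℝ) := by linarith
  convert hgoal using 3
  push_cast
  ring

end
section
variable {k : ℕ} {X : Type*}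

noncomputable def pairSigma (R : Fin k → X) (i : Fin k) : Fin k :=
  if h : ((Finset.univ.filter fun j => R j = R i).erase i).Nonempty then h.choose else i

variable {R : Fin k → X} (hR : PairTuple R)
include hR

lemma ps_spec (i : Fin k) : pairSigma R i ∈ (Finset.univ.filter fun j => R j = R i).erase i := by
  have hmem : i ∈ (Finset.univ.filter fun j => R j = R i) := by simp
  have hcard : ((Finset.univ.filter fun j => R j = R i).erase i).card = 1 := by
    rw [Finset.card_erase_of_mem hmem, hR i]
  have hne : ((Finset.univ.filter fun j => R j = R i).erase i).Nonempty :=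
    Finset.card_pos.mp (by omega)
  rw [pairSigma, dif_pos hne]
  exact hne.choose_spec

lemma ps_ne (i : Fin k) : pairSigma R i ≠ i := (Finset.mem_erase.mp (ps_spec hR i)).1

lemma ps_val (i : Fin k) : R (pairSigma R i) = R i := by
  have := (Finset.mem_erase.mp (ps_spec hR i)).2
  rw [Finset.mem_filter] at this
  exact this.2

lemma ps_pair (i : Fin k) :
    (Finset.univ.filter fun j => R j = R i) = {i, pairSigma R i} := by
  refine (Finset.eq_of_subset_of_card_le ?_ ?_).symm
  · intro j hj
    rw [Finset.mem_insert, Finset.mem_singleton] at hj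
    rcases hj with rfl | rfl
    · simp
    · simp [ps_val hR i]
  · rw [hR i, Finset.card_insert_of_notMem (by simp only [Finset.mem_singleton]; exact fun h => ps_ne hR i h.symm), Finset.card_singleton]

lemma ps_eq_iff {i j : Fin k} : R j = R i ↔ j = i ∨ j = pairSigma R i := by
  constructor
  · intro h
    have : j ∈ (Finset.univ.filter fun j => R j = R i) := by simp [h]
    rw [ps_pair hR i] at this
    simpa using this
  · rintro (rfl | rfl)
    · rfl
    · exact ps_val hR i

lemma ps_invol : Function.Involutive (pairSigma R) := by
  intro i
  have h1 : (Finset.univ.filter fun j => R j = R (pairSigma R i))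
      = (Finset.univ.filter fun j => R j = R i) := by
    simp only [ps_val hR i]
  have h2 := ps_spec hR (pairSigma R i)
  rw [h1, ps_pair hR i, Finset.mem_erase, Finset.mem_insert, Finset.mem_singleton] at h2
  exact h2.2.resolve_right h2.1

end

section
variable {k : ℕ}

def Tof (σ : Fin k → Fin k) : Finset (Fin k) := Finset.univ.filter fun j => j < σ j

lemma card_Tof {σ : Fin k → Fin k} (hinv : Function.Involutive σ) (hfpf : ∀ i, σ i ≠ i)
    {m : ℕ} (hk : k = 2*m) : (Tof σ).card = m := by
  set T' : Finset (Fin k) := Finset.univ.filter fun j => σ j < j with hT'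
  have h1 : (Tof σ).card = T'.card := by
    apply Finset.card_bij (fun i _ => σ i)
    · intro i hi
      rw [Tof, Finset.mem_filter] at hi
      rw [hT', Finset.mem_filter]
      exact ⟨Finset.mem_univ _, by rw [hinv i]; exact hi.2⟩
    · intro a _ b _ hab
      exact hinv.injective hab
    · intro j hj
      rw [hT', Finset.mem_filter] at hj
      refine ⟨σ j, ?_, hinv j⟩
      rw [Tof, Finset.mem_filter]
      exact ⟨Finset.mem_univ _, by rw [hinv j]; exact hj.2⟩
  have h2 : (Tof σ).card + T'.card = k := by
    have hsplit := Finset.card_filter_add_card_filter_not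
      (s := (Finset.univ : Finset (Fin k))) (p := fun j => j < σ j)
    rw [Finset.card_univ, Fintype.card_fin] at hsplit
    have : T' = Finset.univ.filter fun j => ¬ j < σ j := by
      apply Finset.filter_congr
      intro j _
      simp only [eq_iff_iff, not_lt]
      constructor
      · exact le_of_lt
      · intro h
        exact lt_of_le_of_ne h (hfpf j)
    rw [Tof, this]
    exact hsplit
  omega

lemma mem_Tof_of_not {σ : Fin k → Fin k} (hinv : Function.Involutive σ) (hfpf : ∀ i, σ i ≠ i)
    {i : Fin k} (h : i ∉ Tof σ) : σ i ∈ Tof σ := by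
  rw [Tof, Finset.mem_filter, not_and] at h
  rw [Tof, Finset.mem_filter, hinv i]
  refine ⟨Finset.mem_univ _, ?_⟩
  have := h (Finset.mem_univ i)
  exact ((hfpf i).lt_or_gt).resolve_right this

lemma not_Tof_of_mem {σ : Fin k → Fin k} (hinv : Function.Involutive σ)
    {i : Fin k} (h : i ∈ Tof σ) : σ i ∉ Tof σ := by
  rw [Tof, Finset.mem_filter] at h ⊢
  rw [hinv i]
  push_neg
  intro _
  exact le_of_lt h.2

lemma orderEmb_congr {T T' : Finset (Fin k)} (h : T = T') {m : ℕ}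
    (hT : T.card = m) (hT' : T'.card = m) (a : Fin m) :
    T.orderEmbOfFin hT a = T'.orderEmbOfFin hT' a := by subst h; rfl

end


noncomputable def upMap {n k m : ℕ} (R : Fin k → Finset (Fin n)) :
    (Fin k → Fin k) × (Fin m → Finset (Fin n)) :=
  if h : (Tof (pairSigma R)).card = m then
    (pairSigma R, fun a => R ((Tof (pairSigma R)).orderEmbOfFin h a))
  else (id, fun _ => ∅)

section
variable {n q k m : ℕ}

noncomputable def gfun (σ : Fin k → Fin k) (v : Fin m → Finset (Fin n)) : Fin k → Finset (Fin n) :=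
  fun i => if h : (Tof σ).card = m then
      (if hm1 : i ∈ Tof σ then v (((Tof σ).orderIsoOfFin h).symm ⟨i, hm1⟩)
       else if hm2 : σ i ∈ Tof σ then v (((Tof σ).orderIsoOfFin h).symm ⟨σ i, hm2⟩) else ∅)
    else ∅

def rep (σ : Fin k → Fin k) (i : Fin k) : Fin k := if i ∈ Tof σ then i else σ i

variable {σ : Fin k → Fin k} {v : Fin m → Finset (Fin n)}
variable (hinv : Function.Involutive σ) (hfpf : ∀ i, σ i ≠ i) (hT : (Tof σ).card = m)

include hinv hfpf in
lemma rep_mem (i : Fin k) : rep σ i ∈ Tof σ := by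
  rw [rep]
  by_cases hm1 : i ∈ Tof σ
  · rwa [if_pos hm1]
  · rw [if_neg hm1]
    exact mem_Tof_of_not hinv hfpf hm1

include hinv hfpf in
lemma g_eq (i : Fin k) :
    gfun σ v i = v (((Tof σ).orderIsoOfFin hT).symm ⟨rep σ i, rep_mem hinv hfpf i⟩) := by
  by_cases hm1 : i ∈ Tof σ
  · rw [gfun]
    simp only [dif_pos hT, dif_pos hm1]
    congr 1
    exact congrArg _ (Subtype.ext (by simp only [rep]; rw [if_pos hm1]))
  · have hm2 : σ i ∈ Tof σ := mem_Tof_of_not hinv hfpf hm1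
    rw [gfun]
    simp only [dif_pos hT, dif_neg hm1, dif_pos hm2]
    congr 1
    exact congrArg _ (Subtype.ext (by simp only [rep]; rw [if_neg hm1]))

include hinv hfpf in
lemma rep_eq_iff {i j : Fin k} : rep σ j = rep σ i ↔ j = i ∨ j = σ i := by
  constructor
  · intro h
    rw [rep, rep] at h
    by_cases hj : j ∈ Tof σ <;> by_cases hi : i ∈ Tof σ
    · rw [if_pos hj, if_pos hi] at h; exact Or.inl h
    · rw [if_pos hj, if_neg hi] at h; exact Or.inr h
    · rw [if_neg hj, if_pos hi] at h
      refine Or.inr ?_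
      rw [← h, hinv j]
    · rw [if_neg hj, if_neg hi] at h
      exact Or.inl (hinv.injective h)
  · rintro (rfl | rfl)
    · rfl
    · rw [rep, rep]
      by_cases hi : i ∈ Tof σ
      · rw [if_pos hi, if_neg (not_Tof_of_mem hinv hi), hinv i]
      · rw [if_neg hi, if_pos (mem_Tof_of_not hinv hfpf hi)]

include hinv hfpf hT in
lemma g_iff (hvinj : Function.Injective v) {i j : Fin k} :
    gfun σ v j = gfun σ v i ↔ j = i ∨ j = σ i := by
  rw [g_eq hinv hfpf hT j, g_eq hinv hfpf hT i]
  constructor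
  · intro h
    have h2 := ((Tof σ).orderIsoOfFin hT).symm.injective (hvinj h)
    have h3 : rep σ j = rep σ i := congrArg Subtype.val h2
    exact (rep_eq_iff hinv hfpf).mp h3
  · intro h
    have h3 : rep σ j = rep σ i := (rep_eq_iff hinv hfpf).mpr h
    exact congrArg v (congrArg _ (Subtype.ext h3))

end

lemma card_FPFset (m k : ℕ) (hk : k = 2*m) :
    ((Finset.univ : Finset (Fin k → Fin k)).filter fun σ =>
      Function.Involutive σ ∧ ∀ i, σ i ≠ i).card = Nat.doubleFactorial (2*m-1) := by
  have h := card_fpf m (Fin k) (by rw [Fintype.card_fin, hk])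
  rw [Fintype.card_subtype] at h
  convert h using 2

lemma card_P_le (n q m k : ℕ) (hk : k = 2*m) :
    ((Finset.univ : Finset (Fin k → Finset (Fin n))).filter fun R =>
      (∀ i, (R i).card = q) ∧ PairTuple R).card
      ≤ Nat.doubleFactorial (2*m-1) * (n.choose q)^m := by
  classical
  set F : Finset (Fin k → Fin k) := Finset.univ.filter fun σ =>
    Function.Involutive σ ∧ ∀ i, σ i ≠ i with hF
  set QT : Finset (Fin m → Finset (Fin n)) :=
    Finset.univ.filter fun v => ∀ a, (v a).card = q with hQT
  have htarget : (F ×ˢ QT).card = Nat.doubleFactorial (2*m-1) * (n.choose q)^m := by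
    rw [Finset.card_product, card_FPFset m k hk, hQT, card_Qtuple n q m]
  refine le_trans (Finset.card_le_card_of_injOn (f := upMap (m := m)) ?_ ?_) (le_of_eq htarget)
  · intro R hRmem
    rw [Finset.mem_coe, Finset.mem_filter] at hRmem
    obtain ⟨-, hcard, hR⟩ := hRmem
    have hinv := ps_invol hR
    have hfpf := ps_ne hR
    have hT : (Tof (pairSigma R)).card = m := card_Tof hinv hfpf hk
    rw [upMap, dif_pos hT, Finset.mem_coe, Finset.mem_product]
    constructor
    · rw [hF, Finset.mem_filter]; exact ⟨Finset.mem_univ _, hinv, hfpf⟩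
    · rw [hQT, Finset.mem_filter]; exact ⟨Finset.mem_univ _, fun a => hcard _⟩
  · intro R hRmem R' hRmem' hff
    rw [Finset.mem_coe, Finset.mem_filter] at hRmem hRmem'
    obtain ⟨-, hcard, hR⟩ := hRmem
    obtain ⟨-, hcard', hR'⟩ := hRmem'
    have hT : (Tof (pairSigma R)).card = m := card_Tof (ps_invol hR) (ps_ne hR) hk
    have hT' : (Tof (pairSigma R')).card = m := card_Tof (ps_invol hR') (ps_ne hR') hk
    rw [upMap, dif_pos hT, upMap, dif_pos hT', Prod.mk.injEq] at hff
    obtain ⟨hσ, hv⟩ := hff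
    have hTT : Tof (pairSigma R) = Tof (pairSigma R') := by rw [hσ]
    have hval : ∀ a : Fin m, R ((Tof (pairSigma R)).orderEmbOfFin hT a)
        = R' ((Tof (pairSigma R)).orderEmbOfFin hT a) := by
      intro a
      have h := congrFun hv a
      rwa [← orderEmb_congr hTT hT hT' a] at h
    have hrange : ∀ i ∈ Tof (pairSigma R), R i = R' i := by
      intro i hmem
      have : i ∈ Set.range ((Tof (pairSigma R)).orderEmbOfFin hT) := by
        rw [Finset.range_orderEmbOfFin]
        exact hmem
      obtain ⟨a, ha⟩ := this
      rw [← ha]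
      exact hval a
    funext i
    by_cases hmem : i ∈ Tof (pairSigma R)
    · exact hrange i hmem
    · have hmem2 : pairSigma R i ∈ Tof (pairSigma R) :=
        mem_Tof_of_not (ps_invol hR) (ps_ne hR) hmem
      calc R i = R (pairSigma R i) := (ps_val hR i).symm
        _ = R' (pairSigma R i) := hrange _ hmem2
        _ = R' (pairSigma R' i) := by rw [hσ]
        _ = R' i := ps_val hR' i

lemma vinj_of_DT {n q m : ℕ} (hq : 1 ≤ q) {v : Fin m → Finset (Fin n)}
    (hv : ∀ a, (v a).card = q) (hdisj : ∀ a b, a ≠ b → Disjoint (v a) (v b)) :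
    Function.Injective v := by
  intro a b hab
  by_contra hne
  have hd := hdisj a b hne
  rw [hab] at hd
  have hemp : v b = ⊥ := disjoint_self.mp hd
  have := hv b
  rw [hemp] at this
  simp only [Finset.bot_eq_empty, Finset.card_empty] at this
  omega

lemma card_filter_eq_pair {k : ℕ} {p : Fin k → Prop} [DecidablePred p] {i j : Fin k}
    (hne : j ≠ i) (hiff : ∀ a, p a ↔ a = i ∨ a = j) :
    (Finset.univ.filter p).card = 2 := by
  have hset : Finset.univ.filter p = {i, j} := by
    ext a
    simp only [Finset.mem_filter, Finset.mem_univ, true_and, Finset.mem_insert,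
      Finset.mem_singleton]
    exact hiff a
  rw [hset, Finset.card_insert_of_notMem
    (by simp only [Finset.mem_singleton]; exact fun h => hne h.symm), Finset.card_singleton]

lemma card_A_ge (n q m k : ℕ) (hk : k = 2*m) (hq : 1 ≤ q) :
    Nat.doubleFactorial (2*m-1) * (DT n q m).card
      ≤ ((Finset.univ : Finset (Fin k → Finset (Fin n))).filter fun R =>
          (∀ i, (R i).card = q) ∧ PairTuple R ∧
            ∀ i j, R i ≠ R j → Disjoint (R i) (R j)).card := by
  classical
  set F : Finset (Fin k → Fin k) := Finset.univ.filter fun σ =>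
    Function.Involutive σ ∧ ∀ i, σ i ≠ i with hF
  have hsrc : (F ×ˢ DT n q m).card = Nat.doubleFactorial (2*m-1) * (DT n q m).card := by
    rw [Finset.card_product, card_FPFset m k hk]
  rw [← hsrc]
  apply Finset.card_le_card_of_injOn (f := fun p => gfun p.1 p.2)
  · rintro ⟨σ, v⟩ hp
    dsimp only
    rw [Finset.mem_coe, Finset.mem_product, hF, Finset.mem_filter, DT, Finset.mem_filter] at hp
    obtain ⟨⟨-, hinv, hfpf⟩, -, hv, hdisj⟩ := hp
    have hT : (Tof σ).card = m := card_Tof hinv hfpf hk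
    have hvinj : Function.Injective v := vinj_of_DT hq hv hdisj
    rw [Finset.mem_coe, Finset.mem_filter]
    refine ⟨Finset.mem_univ _, ?_, ?_, ?_⟩
    · intro i
      rw [g_eq hinv hfpf hT i]
      exact hv _
    · intro i
      exact @card_filter_eq_pair k (fun j => gfun σ v j = gfun σ v i)
        (fun j => Classical.propDecidable _) i (σ i) (hfpf i)
        (fun a => g_iff hinv hfpf hT hvinj)
    · intro i j hne
      rw [g_eq hinv hfpf hT i, g_eq hinv hfpf hT j] at hne ⊢
      apply hdisj
      intro hab
      exact hne (congrArg v hab)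
  · rintro ⟨σ, v⟩ hp ⟨σ', v'⟩ hp' hg
    dsimp only at hg
    rw [Finset.mem_coe, Finset.mem_product, hF, Finset.mem_filter, DT, Finset.mem_filter] at hp hp'
    obtain ⟨⟨-, hinv, hfpf⟩, -, hv, hdisj⟩ := hp
    obtain ⟨⟨-, hinv', hfpf'⟩, -, hv', hdisj'⟩ := hp' 
    have hT : (Tof σ).card = m := card_Tof hinv hfpf hk
    have hT' : (Tof σ').card = m := card_Tof hinv' hfpf' hk
    have hvinj : Function.Injective v := vinj_of_DT hq hv hdisj
    have hvinj' : Function.Injective v' := vinj_of_DT hq hv' hdisj'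
    have hσ : σ = σ' := by
      funext i
      have h1 : gfun σ v (σ i) = gfun σ v i := (g_iff hinv hfpf hT hvinj).mpr (Or.inr rfl)
      rw [hg] at h1
      have h2 := (g_iff hinv' hfpf' hT' hvinj').mp h1
      exact h2.resolve_left (hfpf i)
    subst hσ
    have hkey : ∀ (w : Fin m → Finset (Fin n)) (a : Fin m),
        gfun σ w (((Tof σ).orderIsoOfFin hT a : {x // x ∈ Tof σ}) : Fin k) = w a := by
      intro w a
      rw [g_eq hinv hfpf hT]
      have hmem := ((Tof σ).orderIsoOfFin hT a).2
      have hrep : rep σ (((Tof σ).orderIsoOfFin hT a : {x // x ∈ Tof σ}) : Fin k)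
          = (((Tof σ).orderIsoOfFin hT a : {x // x ∈ Tof σ}) : Fin k) := by
        simp only [rep]
        rw [if_pos hmem]
      have hsub : (⟨rep σ _, rep_mem hinv hfpf _⟩ : {x // x ∈ Tof σ})
          = (Tof σ).orderIsoOfFin hT a := Subtype.ext hrep
      rw [hsub, OrderIso.symm_apply_apply]
    have hvv : v = v' := by
      funext a
      rw [← hkey v a, hg, hkey v' a]
    rw [hvv]

theorem stmt5 (n q k : ℕ) (hn : 0 < n) (hq : 1 ≤ q) (hqn : q ≤ n)
    (hk0 : 0 < k) (hk : Even k) (hkq : k * q / 2 ≤ n)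
    (A B : Finset (Fin k → Finset (Fin n)))
    (hA : A = Finset.univ.filter fun R =>
      (∀ i, (R i).card = q) ∧ PairTuple R ∧
        ∀ i j, R i ≠ R j → Disjoint (R i) (R j))
    (hB : B = (Finset.univ.filter fun R : Fin k → Finset (Fin n) =>
      (∀ i, (R i).card = q) ∧ PairTuple R) \ A) :
    ((Nat.doubleFactorial (k - 1) : ℝ) * (1 - (k : ℝ) ^ 2 * (q : ℝ) ^ 2 / (4 * n)) *
        (n.choose q : ℝ) ^ (k / 2) ≤ (A.card : ℝ)) ∧
    ((A.card : ℝ) ≤ (Nat.doubleFactorial (k - 1) : ℝ) * (n.choose q : ℝ) ^ (k / 2)) ∧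
    ((B.card : ℝ) ≤ (k : ℝ) ^ 2 * (q : ℝ) ^ 2 / (4 * n) *
        (Nat.doubleFactorial (k - 1) : ℝ) * (n.choose q : ℝ) ^ (k / 2)) := by
  classical
  obtain ⟨m, hm⟩ := hk
  have hk2 : k = 2*m := by omega
  have hm1 : 1 ≤ m := by omega
  have hk1 : k - 1 = 2*m - 1 := by omega
  have hkd : k / 2 = m := by omega
  set Pset : Finset (Fin k → Finset (Fin n)) := Finset.univ.filter fun R =>
    (∀ i, (R i).card = q) ∧ PairTuple R with hPset
  have hAP : A ⊆ Pset := by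
    rw [hA, hPset]
    intro R hR
    rw [Finset.mem_filter] at hR ⊢
    exact ⟨hR.1, hR.2.1, hR.2.2.1⟩
  have hPle : Pset.card ≤ Nat.doubleFactorial (2*m-1) * (n.choose q)^m :=
    card_P_le n q m k hk2
  have hAub : A.card ≤ Nat.doubleFactorial (2*m-1) * (n.choose q)^m :=
    le_trans (Finset.card_le_card hAP) hPle
  have hAge : Nat.doubleFactorial (2*m-1) * (DT n q m).card ≤ A.card := by
    rw [hA]
    exact card_A_ge n q m k hk2 hq
  have hBcard : B.card = Pset.card - A.card := by
    rw [hB, hPset]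
    exact Finset.card_sdiff_of_subset hAP
  -- real versions
  have hDT := DT_ge n q hn hq hqn m hm1
  set N : ℝ := (n.choose q : ℝ) with hN
  have hN0 : 0 ≤ N := by positivity
  have hD0 : (0:ℝ) ≤ (Nat.doubleFactorial (2*m-1) : ℝ) := by positivity
  have hn0 : (0:ℝ) < (n:ℝ) := by exact_mod_cast hn
  have hkr : (k : ℝ) = 2*(m:ℝ) := by rw [hk2]; push_cast; ring
  have hcoef : (1 - (k : ℝ) ^ 2 * (q : ℝ) ^ 2 / (4 * n)) * N^m
      = N^m - (m:ℝ)^2 * (q:ℝ)^2 / (n:ℝ) * N^m := by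
    rw [hkr]
    field_simp
    ring
  have hAubR : (A.card : ℝ) ≤ (Nat.doubleFactorial (2*m-1) : ℝ) * N^m := by
    have := (Nat.cast_le (α := ℝ)).mpr hAub
    push_cast at this
    exact this
  have hAgeR : (Nat.doubleFactorial (2*m-1) : ℝ) * ((DT n q m).card : ℝ) ≤ (A.card : ℝ) := by
    have := (Nat.cast_le (α := ℝ)).mpr hAge
    push_cast at this
    exact this
  have hPleR : (Pset.card : ℝ) ≤ (Nat.doubleFactorial (2*m-1) : ℝ) * N^m := by
    have := (Nat.cast_le (α := ℝ)).mpr hPle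
    push_cast at this
    exact this
  rw [hk1, hkd]
  refine ⟨?_, ?_, ?_⟩
  · calc (Nat.doubleFactorial (2*m-1) : ℝ) * (1 - (k : ℝ) ^ 2 * (q : ℝ) ^ 2 / (4 * n)) * N^m
        = (Nat.doubleFactorial (2*m-1) : ℝ) * ((1 - (k : ℝ) ^ 2 * (q : ℝ) ^ 2 / (4 * n)) * N^m) := by
          ring
      _ = (Nat.doubleFactorial (2*m-1) : ℝ) * (N^m - (m:ℝ)^2 * (q:ℝ)^2 / (n:ℝ) * N^m) := by
          rw [hcoef]
      _ ≤ (Nat.doubleFactorial (2*m-1) : ℝ) * ((DT n q m).card : ℝ) :=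
          mul_le_mul_of_nonneg_left hDT hD0
      _ ≤ (A.card : ℝ) := hAgeR
  · exact hAubR
  · have hBR : (B.card : ℝ) = (Pset.card : ℝ) - (A.card : ℝ) := by
      rw [hBcard, Nat.cast_sub (Finset.card_le_card hAP)]
    have hstep : (B.card : ℝ) ≤ (Nat.doubleFactorial (2*m-1) : ℝ)
        * ((m:ℝ)^2 * (q:ℝ)^2 / (n:ℝ) * N^m) := by
      rw [hBR]
      have h1 : (Nat.doubleFactorial (2*m-1) : ℝ) * (N^m - (m:ℝ)^2 * (q:ℝ)^2 / (n:ℝ) * N^m)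
          ≤ (A.card : ℝ) := le_trans (mul_le_mul_of_nonneg_left hDT hD0) hAgeR
      nlinarith [hPleR, h1]
    have hfin : (Nat.doubleFactorial (2*m-1) : ℝ) * ((m:ℝ)^2 * (q:ℝ)^2 / (n:ℝ) * N^m)
        = (k : ℝ) ^ 2 * (q : ℝ) ^ 2 / (4 * n) * (Nat.doubleFactorial (2*m-1) : ℝ) * N^m := by
      rw [hkr]
      field_simp
      ring
    rw [← hfin]
    exact hstep
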